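/- For strictly positive log-convex θ, the derivative of f(x) = (∑_{k=0}^{Δ-1} θ_{k+1} C(Δ-1,k) x^k)/(∑_{k=0}^{Δ-1} θ_k C(Δ-1,k) x^k) satisfies 0 ≤ f'(x) ≤ (θ_Δ/θ_{Δ-1} − θ_1/θ_0) ψ for all x ≥ 0, where ψ = max_{0 ≤ k ≤ Δ-2} (Δ-1-k) θ_{k+1}/θ_k. -/

import Mathlib

open Finset

private lemma ratio_mono' (Δ : ℕ) (θ : ℕ → ℝ)
    (hpos : ∀ k ≤ Δ, 0 < θ k)
    (hlc : ∀ k, k + 2 ≤ Δ → θ (k + 1) / θ k ≤ θ (k + 2) / θ (k + 1)) :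
    ∀ j, j + 1 ≤ Δ → ∀ i, i ≤ j → θ (i + 1) / θ i ≤ θ (j + 1) / θ j := by
  intro j
  induction j with
  | zero =>
    intro _ i hi
    have : i = 0 := Nat.le_zero.mp hi
    subst this; exact le_rfl
  | succ m ih =>
    intro hm i hi
    by_cases h : i = m + 1
    · subst h; exact le_rfl
    · have hi' : i ≤ m := by omega
      exact (ih (by omega) i hi').trans (hlc m (by omega))

private lemma square_split (n : ℕ) (F : ℕ → ℕ → ℝ) :
    ∑ i ∈ range n, ∑ j ∈ range n, F i j
      = (∑ i ∈ range n, ∑ j ∈ range i, (F i j + F j i)) + ∑ i ∈ range n, F i i := by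
  induction n with
  | zero => simp
  | succ m ih =>
    simp only [sum_range_succ, sum_add_distrib] at *
    linarith [ih]

private lemma pow_diff_eq (x : ℝ) (i j : ℕ) (hj : j < i) :
    (i : ℝ) * x ^ (i - 1) * x ^ j - (j : ℝ) * x ^ (j - 1) * x ^ i
      = ((i : ℝ) - (j : ℝ)) * x ^ (i - 1 + j) := by
  obtain ⟨m, rfl⟩ : ∃ m, i = m + 1 := ⟨i - 1, by omega⟩
  rcases Nat.eq_zero_or_pos j with rfl | hjpos
  · simp
  · obtain ⟨l, rfl⟩ : ∃ l, j = l + 1 := ⟨j - 1, by omega⟩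
    have h1 : m + 1 - 1 = m := rfl
    have h2 : l + 1 - 1 = l := rfl
    rw [h1, h2]
    have e1 : x ^ m * x ^ (l + 1) = x ^ (m + (l + 1)) := (pow_add x m (l + 1)).symm
    have e2 : x ^ l * x ^ (m + 1) = x ^ (m + (l + 1)) := by
      rw [← pow_add]; congr 1; omega
    calc (↑(m + 1) : ℝ) * x ^ m * x ^ (l + 1) - ↑(l + 1) * x ^ l * x ^ (m + 1)
        = (↑(m + 1) : ℝ) * (x ^ m * x ^ (l + 1)) - ↑(l + 1) * (x ^ l * x ^ (m + 1)) := by ring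
      _ = ((↑(m + 1) : ℝ) - ↑(l + 1)) * x ^ (m + (l + 1)) := by rw [e1, e2]; ring

set_option maxHeartbeats 1000000 in
theorem stmt_7 (Δ : ℕ) (hΔ : 3 ≤ Δ) (θ : ℕ → ℝ)
    (hpos : ∀ k ≤ Δ, 0 < θ k)
    (hlc : ∀ k, k + 2 ≤ Δ → θ (k + 1) / θ k ≤ θ (k + 2) / θ (k + 1))
    (x : ℝ) (hx : 0 ≤ x) :
    0 ≤ deriv (fun y : ℝ =>
        (∑ k ∈ Finset.range Δ, θ (k + 1) * ((Δ - 1).choose k : ℝ) * y ^ k) /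
          (∑ k ∈ Finset.range Δ, θ k * ((Δ - 1).choose k : ℝ) * y ^ k)) x ∧
      deriv (fun y : ℝ =>
        (∑ k ∈ Finset.range Δ, θ (k + 1) * ((Δ - 1).choose k : ℝ) * y ^ k) /
          (∑ k ∈ Finset.range Δ, θ k * ((Δ - 1).choose k : ℝ) * y ^ k)) x ≤
      (θ Δ / θ (Δ - 1) - θ 1 / θ 0) *
        (Finset.range (Δ - 1)).sup' (Finset.nonempty_range_iff.mpr (by omega))
          (fun k => ((Δ : ℝ) - 1 - k) * θ (k + 1) / θ k) := by
  have hΔ1 : Δ - 1 + 1 = Δ := by omega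
  have hΔR : (3 : ℝ) ≤ (Δ : ℝ) := by exact_mod_cast hΔ
  set ψ := (Finset.range (Δ - 1)).sup' (Finset.nonempty_range_iff.mpr (by omega))
          (fun k => ((Δ : ℝ) - 1 - k) * θ (k + 1) / θ k) with hψdef
  set R := θ Δ / θ (Δ - 1) - θ 1 / θ 0 with hRdef
  -- positivity of the denominator
  have hposR : ∀ k ∈ range Δ, 0 ≤ θ k * ((Δ - 1).choose k : ℝ) * x ^ k := by
    intro k hk
    have hk' := (hpos k (le_of_lt (mem_range.mp hk))).le
    positivity
  have hD0 : 0 < ∑ k ∈ range Δ, θ k * ((Δ - 1).choose k : ℝ) * x ^ k := by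
    have h0 : θ 0 * ((Δ - 1).choose 0 : ℝ) * x ^ 0
        ≤ ∑ k ∈ range Δ, θ k * ((Δ - 1).choose k : ℝ) * x ^ k :=
      Finset.single_le_sum hposR (mem_range.mpr (by omega))
    have h1 : (0 : ℝ) < θ 0 * ((Δ - 1).choose 0 : ℝ) * x ^ 0 := by
      simpa using hpos 0 (by omega)
    linarith
  -- derivative formula
  have hN : HasDerivAt (fun y : ℝ => ∑ k ∈ range Δ, θ (k + 1) * ((Δ - 1).choose k : ℝ) * y ^ k)
      (∑ k ∈ range Δ, θ (k + 1) * ((Δ - 1).choose k : ℝ) * ((k : ℝ) * x ^ (k - 1))) x :=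
    HasDerivAt.fun_sum fun k _ => (hasDerivAt_pow k x).const_mul _
  have hDd : HasDerivAt (fun y : ℝ => ∑ k ∈ range Δ, θ k * ((Δ - 1).choose k : ℝ) * y ^ k)
      (∑ k ∈ range Δ, θ k * ((Δ - 1).choose k : ℝ) * ((k : ℝ) * x ^ (k - 1))) x :=
    HasDerivAt.fun_sum fun k _ => (hasDerivAt_pow k x).const_mul _
  have hkey : deriv (fun y : ℝ =>
        (∑ k ∈ Finset.range Δ, θ (k + 1) * ((Δ - 1).choose k : ℝ) * y ^ k) /
          (∑ k ∈ Finset.range Δ, θ k * ((Δ - 1).choose k : ℝ) * y ^ k)) x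
      = ((∑ k ∈ range Δ, θ (k + 1) * ((Δ - 1).choose k : ℝ) * ((k : ℝ) * x ^ (k - 1))) *
            (∑ k ∈ range Δ, θ k * ((Δ - 1).choose k : ℝ) * x ^ k) -
          (∑ k ∈ range Δ, θ (k + 1) * ((Δ - 1).choose k : ℝ) * x ^ k) *
            (∑ k ∈ range Δ, θ k * ((Δ - 1).choose k : ℝ) * ((k : ℝ) * x ^ (k - 1)))) /
        (∑ k ∈ range Δ, θ k * ((Δ - 1).choose k : ℝ) * x ^ k) ^ 2 :=
    (hN.div hDd hD0.ne').deriv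
  -- the numerator as a triangular sum
  have hE : (∑ k ∈ range Δ, θ (k + 1) * ((Δ - 1).choose k : ℝ) * ((k : ℝ) * x ^ (k - 1))) *
            (∑ k ∈ range Δ, θ k * ((Δ - 1).choose k : ℝ) * x ^ k) -
          (∑ k ∈ range Δ, θ (k + 1) * ((Δ - 1).choose k : ℝ) * x ^ k) *
            (∑ k ∈ range Δ, θ k * ((Δ - 1).choose k : ℝ) * ((k : ℝ) * x ^ (k - 1)))
      = ∑ i ∈ range Δ, ∑ j ∈ range i,
          (θ (i + 1) * ((Δ - 1).choose i : ℝ) * (θ j * ((Δ - 1).choose j : ℝ))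
            - θ (j + 1) * ((Δ - 1).choose j : ℝ) * (θ i * ((Δ - 1).choose i : ℝ)))
          * (((i : ℝ) - (j : ℝ)) * x ^ (i - 1 + j)) := by
    rw [Finset.sum_mul_sum, Finset.sum_mul_sum, ← Finset.sum_sub_distrib]
    simp only [← Finset.sum_sub_distrib]
    rw [square_split Δ (fun i j =>
      θ (i + 1) * ((Δ - 1).choose i : ℝ) * ((i : ℝ) * x ^ (i - 1)) *
          (θ j * ((Δ - 1).choose j : ℝ) * x ^ j) -
        θ (i + 1) * ((Δ - 1).choose i : ℝ) * x ^ i *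
          (θ j * ((Δ - 1).choose j : ℝ) * ((j : ℝ) * x ^ (j - 1))))]
    have hdiag : ∑ i ∈ range Δ,
        (θ (i + 1) * ((Δ - 1).choose i : ℝ) * ((i : ℝ) * x ^ (i - 1)) *
            (θ i * ((Δ - 1).choose i : ℝ) * x ^ i) -
          θ (i + 1) * ((Δ - 1).choose i : ℝ) * x ^ i *
            (θ i * ((Δ - 1).choose i : ℝ) * ((i : ℝ) * x ^ (i - 1)))) = 0 :=
      Finset.sum_eq_zero fun i _ => by ring
    rw [hdiag, add_zero]
    refine Finset.sum_congr rfl fun i _ => Finset.sum_congr rfl fun j hj => ?_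
    have hj' : j < i := mem_range.mp hj
    rw [show
      (θ (i + 1) * ((Δ - 1).choose i : ℝ) * ((i : ℝ) * x ^ (i - 1)) *
            (θ j * ((Δ - 1).choose j : ℝ) * x ^ j) -
          θ (i + 1) * ((Δ - 1).choose i : ℝ) * x ^ i *
            (θ j * ((Δ - 1).choose j : ℝ) * ((j : ℝ) * x ^ (j - 1))) +
        (θ (j + 1) * ((Δ - 1).choose j : ℝ) * ((j : ℝ) * x ^ (j - 1)) *
            (θ i * ((Δ - 1).choose i : ℝ) * x ^ i) -
          θ (j + 1) * ((Δ - 1).choose j : ℝ) * x ^ j *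
            (θ i * ((Δ - 1).choose i : ℝ) * ((i : ℝ) * x ^ (i - 1)))))
      = (θ (i + 1) * ((Δ - 1).choose i : ℝ) * (θ j * ((Δ - 1).choose j : ℝ))
            - θ (j + 1) * ((Δ - 1).choose j : ℝ) * (θ i * ((Δ - 1).choose i : ℝ)))
          * ((i : ℝ) * x ^ (i - 1) * x ^ j - (j : ℝ) * x ^ (j - 1) * x ^ i) from by ring,
      pow_diff_eq x i j hj']
  -- ratio monotonicity facts
  have hrm := ratio_mono' Δ θ hpos hlc
  have hcross : ∀ i j : ℕ, j ≤ i → i + 1 ≤ Δ → θ (j + 1) * θ i ≤ θ (i + 1) * θ j := by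
    intro i j hji hiΔ
    have h := hrm i hiΔ j hji
    have hi0 := hpos i (by omega)
    have hj0 := hpos j (by omega)
    exact (div_le_div_iff₀ hj0 hi0).mp h
  have hR0 : 0 ≤ R := by
    have h := hrm (Δ - 1) (by omega) 0 (by omega)
    rw [hΔ1] at h
    rw [hRdef]; linarith
  have hψθ : ∀ q, q + 2 ≤ Δ → ((Δ : ℝ) - 1 - (q : ℝ)) * θ (q + 1) ≤ ψ * θ q := by
    intro q hq
    have hmem : q ∈ range (Δ - 1) := mem_range.mpr (by omega)
    have h := Finset.le_sup' (fun k => ((Δ : ℝ) - 1 - k) * θ (k + 1) / θ k) hmem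
    rw [hψdef]
    exact (div_le_iff₀ (hpos q (by omega))).mp h
  have hψ0 : 0 ≤ ψ := by
    have h := hψθ 0 (by omega)
    norm_num at h
    have h0 := hpos 0 (by omega)
    have h1 := hpos 1 (by omega)
    have hd : (0:ℝ) < (Δ : ℝ) - 1 := by linarith
    have key : 0 < ψ * θ 0 := lt_of_lt_of_le (mul_pos hd h1) h
    nlinarith
  -- lower bound of numerator terms
  have hterm_nonneg : ∀ i ∈ range Δ, ∀ j ∈ range i,
      0 ≤ (θ (i + 1) * ((Δ - 1).choose i : ℝ) * (θ j * ((Δ - 1).choose j : ℝ))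
            - θ (j + 1) * ((Δ - 1).choose j : ℝ) * (θ i * ((Δ - 1).choose i : ℝ)))
          * (((i : ℝ) - (j : ℝ)) * x ^ (i - 1 + j)) := by
    intro i hi j hj
    have hiΔ : i < Δ := mem_range.mp hi
    have hji : j < i := mem_range.mp hj
    have hc := hcross i j (by omega) (by omega)
    have hci : (0 : ℝ) ≤ ((Δ - 1).choose i : ℝ) := Nat.cast_nonneg _
    have hcj : (0 : ℝ) ≤ ((Δ - 1).choose j : ℝ) := Nat.cast_nonneg _
    have h1 : 0 ≤ θ (i + 1) * ((Δ - 1).choose i : ℝ) * (θ j * ((Δ - 1).choose j : ℝ))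
            - θ (j + 1) * ((Δ - 1).choose j : ℝ) * (θ i * ((Δ - 1).choose i : ℝ)) := by
      nlinarith [mul_le_mul_of_nonneg_right hc (mul_nonneg hci hcj)]
    have h2 : (0 : ℝ) ≤ ((i : ℝ) - (j : ℝ)) * x ^ (i - 1 + j) := by
      have : (j : ℝ) ≤ (i : ℝ) := by exact_mod_cast hji.le
      have := pow_nonneg hx (i - 1 + j)
      nlinarith
    exact mul_nonneg h1 h2
  -- core termwise upper bound
  have hcore : ∀ q j : ℕ, q + 2 ≤ Δ → j ≤ q →
      (θ (q + 1 + 1) * ((Δ - 1).choose (q + 1) : ℝ) * (θ j * ((Δ - 1).choose j : ℝ))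
            - θ (j + 1) * ((Δ - 1).choose j : ℝ) * (θ (q + 1) * ((Δ - 1).choose (q + 1) : ℝ)))
          * ((((q + 1 : ℕ) : ℝ) - (j : ℝ)) * x ^ (q + 1 - 1 + j))
        ≤ R * ψ * ((θ q * ((Δ - 1).choose q : ℝ) * x ^ q) *
            (θ j * ((Δ - 1).choose j : ℝ) * x ^ j)) := by
    intro q j hq hjq
    have hq1 : q + 1 - 1 = q := rfl
    have hxp : x ^ (q + 1 - 1 + j) = x ^ q * x ^ j := by rw [hq1, pow_add]
    have hθq := hpos q (by omega)
    have hθq1 := hpos (q + 1) (by omega)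
    have hθq2 := hpos (q + 2) (by omega)
    have hθj := hpos j (by omega)
    have hθj1 := hpos (j + 1) (by omega)
    have hci : (0 : ℝ) ≤ ((Δ - 1).choose (q + 1) : ℝ) := Nat.cast_nonneg _
    have hcq : (0 : ℝ) ≤ ((Δ - 1).choose q : ℝ) := Nat.cast_nonneg _
    have hcj : (0 : ℝ) ≤ ((Δ - 1).choose j : ℝ) := Nat.cast_nonneg _
    -- step 1: ratio gap bound
    have h1 : θ (q + 2) * θ j - θ (j + 1) * θ (q + 1) ≤ R * (θ (q + 1) * θ j) := by
      have hA : θ (q + 1 + 1) / θ (q + 1) ≤ θ Δ / θ (Δ - 1) := by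
        have h := hrm (Δ - 1) (by omega) (q + 1) (by omega)
        rwa [hΔ1] at h
      have hB : θ 1 / θ 0 ≤ θ (j + 1) / θ j := hrm j (by omega) 0 (by omega)
      have hgap : θ (q + 2) / θ (q + 1) - θ (j + 1) / θ j ≤ R := by
        rw [hRdef]
        have : θ (q + 1 + 1) = θ (q + 2) := by norm_num
        rw [this] at hA
        linarith
      have e1 : θ (q + 2) * θ j - θ (j + 1) * θ (q + 1)
          = (θ (q + 2) / θ (q + 1) - θ (j + 1) / θ j) * (θ (q + 1) * θ j) := by
        field_simp
      rw [e1]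
      exact mul_le_mul_of_nonneg_right hgap (by positivity)
    -- step 2: binomial/psi bound
    have h2 : ((q : ℝ) + 1) * (θ (q + 1) * ((Δ - 1).choose (q + 1) : ℝ))
        ≤ ψ * (θ q * ((Δ - 1).choose q : ℝ)) := by
      have hch := Nat.choose_succ_right_eq (Δ - 1) q
      have hchR : ((Δ - 1).choose (q + 1) : ℝ) * ((q : ℝ) + 1)
          = ((Δ - 1).choose q : ℝ) * ((Δ : ℝ) - 1 - (q : ℝ)) := by
        have hle : q ≤ Δ - 1 := by omega
        have hle1 : (1 : ℕ) ≤ Δ := by omega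
        have hcast : (((Δ - 1).choose (q + 1) * (q + 1) : ℕ) : ℝ)
            = (((Δ - 1).choose q * (Δ - 1 - q) : ℕ) : ℝ) := Nat.cast_inj.mpr hch
        push_cast [Nat.cast_sub hle, Nat.cast_sub hle1] at hcast
        linear_combination hcast
      have hψq := hψθ q hq
      nlinarith [mul_le_mul_of_nonneg_right hψq hcq]
    -- assemble
    rw [hxp]
    have hfac : (θ (q + 1 + 1) * ((Δ - 1).choose (q + 1) : ℝ) * (θ j * ((Δ - 1).choose j : ℝ))
            - θ (j + 1) * ((Δ - 1).choose j : ℝ) * (θ (q + 1) * ((Δ - 1).choose (q + 1) : ℝ)))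
        = (θ (q + 2) * θ j - θ (j + 1) * θ (q + 1)) *
            (((Δ - 1).choose (q + 1) : ℝ) * ((Δ - 1).choose j : ℝ)) := by
      have : θ (q + 1 + 1) = θ (q + 2) := by norm_num
      rw [this]; ring
    rw [hfac]
    have hij : (((q + 1 : ℕ) : ℝ) - (j : ℝ)) = ((q : ℝ) + 1 - (j : ℝ)) := by push_cast; ring
    rw [hij]
    have hj0 : (0 : ℝ) ≤ (j : ℝ) := Nat.cast_nonneg j
    have hjq' : (j : ℝ) ≤ (q : ℝ) := by exact_mod_cast hjq
    have hxq : (0 : ℝ) ≤ x ^ q := pow_nonneg hx q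
    have hxj : (0 : ℝ) ≤ x ^ j := pow_nonneg hx j
    -- chain of inequalities
    have step1 : (θ (q + 2) * θ j - θ (j + 1) * θ (q + 1)) *
            (((Δ - 1).choose (q + 1) : ℝ) * ((Δ - 1).choose j : ℝ)) *
            (((q : ℝ) + 1 - (j : ℝ)) * (x ^ q * x ^ j))
        ≤ R * (θ (q + 1) * θ j) *
            (((Δ - 1).choose (q + 1) : ℝ) * ((Δ - 1).choose j : ℝ)) *
            (((q : ℝ) + 1 - (j : ℝ)) * (x ^ q * x ^ j)) := by
      exact mul_le_mul_of_nonneg_right (mul_le_mul_of_nonneg_right h1 (mul_nonneg hci hcj))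
        (mul_nonneg (by linarith) (mul_nonneg hxq hxj))
    have step2 : R * (θ (q + 1) * θ j) *
            (((Δ - 1).choose (q + 1) : ℝ) * ((Δ - 1).choose j : ℝ)) *
            (((q : ℝ) + 1 - (j : ℝ)) * (x ^ q * x ^ j))
        ≤ R * (θ (q + 1) * θ j) *
            (((Δ - 1).choose (q + 1) : ℝ) * ((Δ - 1).choose j : ℝ)) *
            (((q : ℝ) + 1) * (x ^ q * x ^ j)) := by
      have hL0 : (0:ℝ) ≤ R * (θ (q + 1) * θ j) *
          (((Δ - 1).choose (q + 1) : ℝ) * ((Δ - 1).choose j : ℝ)) :=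
        mul_nonneg (mul_nonneg hR0 (mul_nonneg hθq1.le hθj.le)) (mul_nonneg hci hcj)
      exact mul_le_mul_of_nonneg_left
        (mul_le_mul_of_nonneg_right (by linarith) (mul_nonneg hxq hxj)) hL0
    have step3 : R * (θ (q + 1) * θ j) *
            (((Δ - 1).choose (q + 1) : ℝ) * ((Δ - 1).choose j : ℝ)) *
            (((q : ℝ) + 1) * (x ^ q * x ^ j))
        ≤ R * ψ * ((θ q * ((Δ - 1).choose q : ℝ) * x ^ q) *
            (θ j * ((Δ - 1).choose j : ℝ) * x ^ j)) := by
      have e : R * (θ (q + 1) * θ j) *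
            (((Δ - 1).choose (q + 1) : ℝ) * ((Δ - 1).choose j : ℝ)) *
            (((q : ℝ) + 1) * (x ^ q * x ^ j))
          = (((q : ℝ) + 1) * (θ (q + 1) * ((Δ - 1).choose (q + 1) : ℝ))) *
              (R * (θ j * ((Δ - 1).choose j : ℝ)) * (x ^ q * x ^ j)) := by ring
      have e2 : R * ψ * ((θ q * ((Δ - 1).choose q : ℝ) * x ^ q) *
            (θ j * ((Δ - 1).choose j : ℝ) * x ^ j))
          = (ψ * (θ q * ((Δ - 1).choose q : ℝ))) *
              (R * (θ j * ((Δ - 1).choose j : ℝ)) * (x ^ q * x ^ j)) := by ring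
      rw [e, e2]
      exact mul_le_mul_of_nonneg_right h2
        (mul_nonneg (mul_nonneg hR0 (mul_nonneg hθj.le hcj)) (mul_nonneg hxq hxj))
    linarith
  -- global upper bound on the numerator
  have hupper : (∑ i ∈ range Δ, ∑ j ∈ range i,
          (θ (i + 1) * ((Δ - 1).choose i : ℝ) * (θ j * ((Δ - 1).choose j : ℝ))
            - θ (j + 1) * ((Δ - 1).choose j : ℝ) * (θ i * ((Δ - 1).choose i : ℝ)))
          * (((i : ℝ) - (j : ℝ)) * x ^ (i - 1 + j)))
      ≤ R * ψ * (∑ k ∈ range Δ, θ k * ((Δ - 1).choose k : ℝ) * x ^ k) ^ 2 := by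
    have hD2 : (∑ k ∈ range Δ, θ k * ((Δ - 1).choose k : ℝ) * x ^ k) ^ 2
        = ∑ q ∈ range Δ, ∑ j ∈ range Δ,
            (θ q * ((Δ - 1).choose q : ℝ) * x ^ q) * (θ j * ((Δ - 1).choose j : ℝ) * x ^ j) := by
      rw [sq, Finset.sum_mul_sum]
    calc (∑ i ∈ range Δ, ∑ j ∈ range i,
          (θ (i + 1) * ((Δ - 1).choose i : ℝ) * (θ j * ((Δ - 1).choose j : ℝ))
            - θ (j + 1) * ((Δ - 1).choose j : ℝ) * (θ i * ((Δ - 1).choose i : ℝ)))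
          * (((i : ℝ) - (j : ℝ)) * x ^ (i - 1 + j)))
        = ∑ q ∈ range (Δ - 1), ∑ j ∈ range (q + 1),
          (θ (q + 1 + 1) * ((Δ - 1).choose (q + 1) : ℝ) * (θ j * ((Δ - 1).choose j : ℝ))
            - θ (j + 1) * ((Δ - 1).choose j : ℝ) * (θ (q + 1) * ((Δ - 1).choose (q + 1) : ℝ)))
          * ((((q + 1 : ℕ) : ℝ) - (j : ℝ)) * x ^ (q + 1 - 1 + j)) := by
          conv_lhs => rw [show range Δ = range (Δ - 1 + 1) from by rw [hΔ1]]
          rw [Finset.sum_range_succ']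
          simp
      _ ≤ ∑ q ∈ range (Δ - 1), ∑ j ∈ range Δ,
          R * ψ * ((θ q * ((Δ - 1).choose q : ℝ) * x ^ q) *
            (θ j * ((Δ - 1).choose j : ℝ) * x ^ j)) := by
          apply Finset.sum_le_sum
          intro q hq
          have hqΔ : q + 2 ≤ Δ := by have := mem_range.mp hq; omega
          calc ∑ j ∈ range (q + 1),
              (θ (q + 1 + 1) * ((Δ - 1).choose (q + 1) : ℝ) * (θ j * ((Δ - 1).choose j : ℝ))
                - θ (j + 1) * ((Δ - 1).choose j : ℝ) * (θ (q + 1) * ((Δ - 1).choose (q + 1) : ℝ)))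
              * ((((q + 1 : ℕ) : ℝ) - (j : ℝ)) * x ^ (q + 1 - 1 + j))
              ≤ ∑ j ∈ range (q + 1),
                R * ψ * ((θ q * ((Δ - 1).choose q : ℝ) * x ^ q) *
                  (θ j * ((Δ - 1).choose j : ℝ) * x ^ j)) := by
                apply Finset.sum_le_sum
                intro j hj
                exact hcore q j hqΔ (by have := mem_range.mp hj; omega)
            _ ≤ ∑ j ∈ range Δ,
                R * ψ * ((θ q * ((Δ - 1).choose q : ℝ) * x ^ q) *
                  (θ j * ((Δ - 1).choose j : ℝ) * x ^ j)) := by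
                apply Finset.sum_le_sum_of_subset_of_nonneg
                · exact Finset.range_subset_range.mpr (by omega)
                · intro j hj _
                  have hθq := (hpos q (by omega)).le
                  have hθj := (hpos j (le_of_lt (mem_range.mp hj))).le
                  have := mul_nonneg hR0 hψ0
                  positivity
      _ ≤ ∑ q ∈ range Δ, ∑ j ∈ range Δ,
          R * ψ * ((θ q * ((Δ - 1).choose q : ℝ) * x ^ q) *
            (θ j * ((Δ - 1).choose j : ℝ) * x ^ j)) := by
          apply Finset.sum_le_sum_of_subset_of_nonneg
          · exact Finset.range_subset_range.mpr (by omega)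
          · intro q hq _
            apply Finset.sum_nonneg
            intro j hj
            have hθq := (hpos q (le_of_lt (mem_range.mp hq))).le
            have hθj := (hpos j (le_of_lt (mem_range.mp hj))).le
            have := mul_nonneg hR0 hψ0
            positivity
      _ = R * ψ * (∑ k ∈ range Δ, θ k * ((Δ - 1).choose k : ℝ) * x ^ k) ^ 2 := by
          rw [hD2, Finset.mul_sum]
          exact Finset.sum_congr rfl fun q _ => by rw [Finset.mul_sum]
  constructor
  · rw [hkey, hE]
    apply div_nonneg _ (sq_nonneg _)
    exact Finset.sum_nonneg fun i hi => Finset.sum_nonneg fun j hj => hterm_nonneg i hi j hj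
  · rw [hkey, hE, div_le_iff₀ (pow_pos hD0 2)]
    exact hupper
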